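/- Estimate on the commutator term: for all u ∈ ℓ²(V,μ), ‖P_{χ_n}[u]‖ ≤ 2β_n‖u‖, where β_n := d_{2n} p_{2n}/(μ_0 n), d_m := max over the ball B(x_0,m) of the vertex degree, and p_m := max over B(x_0,m) of max_y b(x,y). -/

import Mathlib

open scoped BigOperators

/-- The formal magnetic Laplacian on a weighted graph. -/
noncomputable def magLap {V : Type*} (μ : V → ℝ) (b : V → V → ℝ) (θ : V → V → ℝ)
    (u : V → ℂ) (x : V) : ℂ :=
  (μ x : ℂ)⁻¹ * ∑' y, (b x y : ℂ) * (u x - Complex.exp (Complex.I * (θ x y : ℝ)) * u y)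

/-- The term `P_ψ[u]`. -/
noncomputable def magP {V : Type*} (μ : V → ℝ) (b : V → V → ℝ) (θ : V → V → ℝ)
    (ψ u : V → ℂ) (x : V) : ℂ :=
  (μ x : ℂ)⁻¹ *
    ∑' y, (b x y : ℂ) * (ψ x - ψ y) * (u x - Complex.exp (Complex.I * (θ x y : ℝ)) * u y)

/-- The cut-off function `χ_n`. -/
noncomputable def cutoff {V : Type*} (dist : V → ℕ) (n : ℕ) (x : V) : ℝ :=
  min (max ((2 * (n : ℝ) - (dist x : ℝ)) / (n : ℝ)) 0) 1

/-- Squared norm in `ℓ²(V, μ)`. -/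
noncomputable def wnormSq {V : Type*} (μ : V → ℝ) (f : V → ℂ) : ℝ :=
  ∑' x, μ x * ‖f x‖ ^ 2

/-- Inner product in `ℓ²(V, μ)`. -/
noncomputable def wInner {V : Type*} (μ : V → ℝ) (f g : V → ℂ) : ℂ :=
  ∑' x, (μ x : ℂ) * f x * (starRingEnd ℂ) (g x)

section
variable {V : Type*} [Countable V] (μ : V → ℝ) (μ₀ : ℝ) (b : V → V → ℝ) (θ : V → V → ℝ)
  (G : SimpleGraph V) (x₀ : V) (D P : ℕ → ℝ)

/-- Estimate on the commutator term: `‖P_{χ_n}[u]‖ ≤ 2 β_n ‖u‖`, with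
`β_n = d_{2n} p_{2n} / (μ₀ n)`. -/
theorem P_cutoff_estimate
    (hμ0 : 0 < μ₀) (hμ : ∀ x, μ₀ ≤ μ x)
    (hbsymm : ∀ x y, b x y = b y x) (hbnn : ∀ x y, 0 ≤ b x y) (hbdiag : ∀ x, b x x = 0)
    (hloc : ∀ x, {y | 0 < b x y}.Finite)
    (hG : ∀ x y, G.Adj x y ↔ 0 < b x y) (hconn : G.Connected)
    (hθ : ∀ x y, θ x y = -θ y x) (hθbd : ∀ x y, |θ x y| ≤ Real.pi)
    (hD : ∀ (m : ℕ) (x : V), G.dist x₀ x ≤ m → ({y | 0 < b x y}.ncard : ℝ) ≤ D m)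
    (hP : ∀ (m : ℕ) (x y : V), G.dist x₀ x ≤ m → b x y ≤ P m)
    (n : ℕ) (hn : 1 ≤ n)
    (u : V → ℂ) (hu : Summable fun x => μ x * ‖u x‖ ^ 2) :
    Real.sqrt (wnormSq μ (magP μ b θ (fun x => (cutoff (fun z => G.dist x₀ z) n x : ℂ)) u))
      ≤ 2 * (D (2 * n) * P (2 * n) / (μ₀ * n)) * Real.sqrt (wnormSq μ u) := by
  classical
  set d : V → ℕ := fun z => G.dist x₀ z with hd
  set χ : V → ℝ := cutoff d n with hχ
  set ψ : V → ℂ := fun x => (χ x : ℂ) with hψ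
  set β : ℝ := D (2 * n) * P (2 * n) / (μ₀ * n) with hβ
  set k : V → V → ℝ := fun x y => b x y * |χ x - χ y| with hk
  have hn' : (0 : ℝ) < n := by exact_mod_cast hn
  have hd0 : d x₀ = 0 := SimpleGraph.dist_self
  have hD2 : 0 ≤ D (2 * n) :=
    le_trans (Nat.cast_nonneg _) (hD (2 * n) x₀ (le_of_eq_of_le hd0 (Nat.zero_le _)))
  have hP2 : 0 ≤ P (2 * n) := (hbnn x₀ x₀).trans (hP (2 * n) x₀ x₀ (le_of_eq_of_le hd0 (Nat.zero_le _)))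
  have hβ0 : 0 ≤ β := by
    apply div_nonneg (mul_nonneg hD2 hP2)
    positivity
  have hknn : ∀ x y, 0 ≤ k x y := fun x y => mul_nonneg (hbnn x y) (abs_nonneg _)
  -- vanishing of cutoff far away
  have hχ0 : ∀ z, 2 * n ≤ d z → χ z = 0 := by
    intro z hz
    have h1 : (2 * (n : ℝ) - (d z : ℝ)) / (n : ℝ) ≤ 0 := by
      apply div_nonpos_of_nonpos_of_nonneg
      · have : (2 * n : ℝ) ≤ (d z : ℝ) := by exact_mod_cast hz
        linarith
      · exact hn'.le
    simp only [hχ, cutoff]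
    rw [max_eq_right h1, min_eq_left (by norm_num)]
  -- Lipschitz estimate on adjacent vertices
  have hlip : ∀ x y, 0 < b x y → |χ x - χ y| ≤ 1 / n := by
    intro x y hb
    have hadj : G.Adj x y := (hG x y).mpr hb
    have h1 : G.dist x y = 1 := (SimpleGraph.dist_eq_one_iff_adj).mpr hadj
    have h2 : G.dist y x = 1 := (SimpleGraph.dist_eq_one_iff_adj).mpr hadj.symm
    have hxy : d y ≤ d x + 1 := by
      have := hconn.dist_triangle (u := x₀) (v := x) (w := y)
      simpa [hd, h1] using this
    have hyx : d x ≤ d y + 1 := by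
      have := hconn.dist_triangle (u := x₀) (v := y) (w := x)
      simpa [hd, h2] using this
    have habs : |(d x : ℝ) - (d y : ℝ)| ≤ 1 := by
      rw [abs_sub_le_iff]
      constructor
      · have : (d x : ℝ) ≤ (d y : ℝ) + 1 := by exact_mod_cast hyx
        linarith
      · have : (d y : ℝ) ≤ (d x : ℝ) + 1 := by exact_mod_cast hxy
        linarith
    have step1 : |χ x - χ y| ≤
        |(2 * (n : ℝ) - (d x : ℝ)) / (n : ℝ) - (2 * (n : ℝ) - (d y : ℝ)) / (n : ℝ)| := by
      simp only [hχ, cutoff]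
      refine le_trans (abs_min_sub_min_le_max _ _ _ _) ?_
      simp only [sub_self, abs_zero]
      refine max_le (le_trans (abs_max_sub_max_le_max _ _ _ _) ?_) (abs_nonneg _)
      simp [le_max_iff]
    refine step1.trans ?_
    have : (2 * (n : ℝ) - (d x : ℝ)) / (n : ℝ) - (2 * (n : ℝ) - (d y : ℝ)) / (n : ℝ)
        = ((d y : ℝ) - (d x : ℝ)) / n := by ring
    rw [this, abs_div, abs_of_pos hn', div_le_div_iff_of_pos_right hn', abs_sub_comm]
    exact habs
  -- k vanishes if x is far away
  have hk0 : ∀ x y, 2 * n < d x → k x y = 0 := by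
    intro x y hx
    rcases eq_or_lt_of_le (hbnn x y) with hb | hb
    · simp [hk, ← hb]
    · have hadj : G.Adj x y := (hG x y).mpr hb
      have h2 : G.dist y x = 1 := (SimpleGraph.dist_eq_one_iff_adj).mpr hadj.symm
      have hyx : d x ≤ d y + 1 := by
        have := hconn.dist_triangle (u := x₀) (v := y) (w := x)
        simpa [hd, h2] using this
      have hy : 2 * n ≤ d y := by omega
      have : χ x = 0 := hχ0 x (by omega)
      have : χ x - χ y = 0 := by rw [this, hχ0 y hy]; ring
      simp [hk, this]
  -- the support finsets
  set F : V → Finset V := fun x => (hloc x).toFinset with hF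
  have hmemF : ∀ x y, y ∈ F x ↔ 0 < b x y := by
    intro x y; simp [hF, Set.Finite.mem_toFinset]
  -- row sums
  have hrow : ∀ x, ∑ y ∈ F x, k x y ≤ β * μ x := by
    intro x
    by_cases hx : d x ≤ 2 * n
    · have h1 : ∑ y ∈ F x, k x y ≤ ∑ _y ∈ F x, P (2 * n) * (1 / n) := by
        refine Finset.sum_le_sum fun y hy => ?_
        exact mul_le_mul (hP (2 * n) x y hx) (hlip x y ((hmemF x y).mp hy)) (abs_nonneg _) hP2
      have h2 : ∑ _y ∈ F x, P (2 * n) * (1 / n) = ((F x).card : ℝ) * (P (2 * n) * (1 / n)) := by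
        rw [Finset.sum_const, nsmul_eq_mul]
      have hcard : ((F x).card : ℝ) ≤ D (2 * n) := by
        have : (F x).card = {y | 0 < b x y}.ncard :=
          (Set.ncard_eq_toFinset_card _ (hloc x)).symm
        rw [this]; exact hD (2 * n) x hx
      have h3 : ((F x).card : ℝ) * (P (2 * n) * (1 / n)) ≤ D (2 * n) * (P (2 * n) * (1 / n)) :=
        mul_le_mul_of_nonneg_right hcard (by positivity)
      have h4 : D (2 * n) * (P (2 * n) * (1 / n)) ≤ β * μ x := by
        have he : D (2 * n) * (P (2 * n) * (1 / n)) = β * μ₀ := by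
          rw [hβ]; field_simp
        rw [he]
        exact mul_le_mul_of_nonneg_left (hμ x) hβ0
      linarith [h1, h2.le, h3, h4]
    · have : ∑ y ∈ F x, k x y = 0 :=
        Finset.sum_eq_zero fun y _ => hk0 x y (lt_of_not_ge hx)
      rw [this]
      exact mul_nonneg hβ0 (lt_of_lt_of_le hμ0 (hμ x)).le
  have hsym : ∀ x y, k x y = k y x := by
    intro x y; simp only [hk]; rw [hbsymm, abs_sub_comm]
  -- column sums over any finset
  have hcol : ∀ (t : Finset V) (y : V), ∑ x ∈ t, k x y ≤ β * μ y := by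
    intro t y
    have h1 : ∑ x ∈ t, k x y = ∑ x ∈ t.filter (fun x => x ∈ F y), k x y := by
      refine (Finset.sum_filter_of_ne ?_).symm
      intro x _ hne
      rw [hmemF]
      rcases eq_or_lt_of_le (hbnn y x) with hb | hb
      · exfalso; apply hne
        have : b x y = 0 := by rw [hbsymm]; exact hb.symm
        simp [hk, this]
      · exact hb
    rw [h1]
    have h2 : ∑ x ∈ t.filter (fun x => x ∈ F y), k x y ≤ ∑ x ∈ F y, k x y := by
      refine Finset.sum_le_sum_of_subset_of_nonneg ?_ (fun x _ _ => hknn x y)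
      intro x hx
      exact (Finset.mem_filter.mp hx).2
    refine h2.trans ?_
    have h3 : ∑ x ∈ F y, k x y = ∑ x ∈ F y, k y x :=
      Finset.sum_congr rfl fun x _ => hsym x y
    rw [h3]; exact hrow y
  -- pointwise estimate
  have hμx : ∀ x, 0 < μ x := fun x => lt_of_lt_of_le hμ0 (hμ x)
  have hpt : ∀ x, μ x * ‖magP μ b θ ψ u x‖ ^ 2
      ≤ β * ∑ y ∈ F x, k x y * (2 * ‖u x‖ ^ 2 + 2 * ‖u y‖ ^ 2) := by
    intro x
    have htsum : magP μ b θ ψ u x = (μ x : ℂ)⁻¹ *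
        ∑ y ∈ F x, (b x y : ℂ) * (ψ x - ψ y) *
          (u x - Complex.exp (Complex.I * (θ x y : ℝ)) * u y) := by
      unfold magP
      congr 1
      refine tsum_eq_sum ?_
      intro y hy
      have : b x y = 0 := le_antisymm (not_lt.mp (fun h => hy ((hmemF x y).mpr h))) (hbnn x y)
      simp [this]
    set A : ℝ := ∑ y ∈ F x, k x y * (‖u x‖ + ‖u y‖) with hA
    have hAnn : 0 ≤ A :=
      Finset.sum_nonneg fun y _ => mul_nonneg (hknn x y) (by positivity)
    have hnorm : ‖magP μ b θ ψ u x‖ ≤ (μ x)⁻¹ * A := by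
      rw [htsum, norm_mul]
      have h1 : ‖((μ x : ℂ))⁻¹‖ = (μ x)⁻¹ := by
        rw [norm_inv, Complex.norm_real, Real.norm_eq_abs, abs_of_pos (hμx x)]
      rw [h1]
      refine mul_le_mul_of_nonneg_left ?_ (inv_nonneg.mpr (hμx x).le)
      refine (norm_sum_le _ _).trans ?_
      refine Finset.sum_le_sum fun y _ => ?_
      rw [norm_mul, norm_mul]
      have hb : ‖(b x y : ℂ)‖ = b x y := by
        rw [Complex.norm_real, Real.norm_eq_abs, abs_of_nonneg (hbnn x y)]
      have hψn : ‖ψ x - ψ y‖ = |χ x - χ y| := by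
        simp only [hψ]
        rw [← Complex.ofReal_sub, Complex.norm_real, Real.norm_eq_abs]
      have hexp : ‖Complex.exp (Complex.I * (θ x y : ℝ))‖ = 1 := by
        rw [Complex.norm_exp]
        simp
      have hu2 : ‖u x - Complex.exp (Complex.I * (θ x y : ℝ)) * u y‖ ≤ ‖u x‖ + ‖u y‖ := by
        refine (norm_sub_le _ _).trans ?_
        rw [norm_mul, hexp, one_mul]
      rw [hb, hψn]
      calc b x y * |χ x - χ y| * ‖u x - Complex.exp (Complex.I * (θ x y : ℝ)) * u y‖
          ≤ b x y * |χ x - χ y| * (‖u x‖ + ‖u y‖) :=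
            mul_le_mul_of_nonneg_left hu2 (hknn x y)
        _ = k x y * (‖u x‖ + ‖u y‖) := rfl
    -- Cauchy-Schwarz
    have hCS : A ^ 2 ≤ (∑ y ∈ F x, k x y) * ∑ y ∈ F x, k x y * (‖u x‖ + ‖u y‖) ^ 2 := by
      have := Finset.sum_mul_sq_le_sq_mul_sq (F x)
        (fun y => Real.sqrt (k x y)) (fun y => Real.sqrt (k x y) * (‖u x‖ + ‖u y‖))
      have e1 : ∑ y ∈ F x, Real.sqrt (k x y) * (Real.sqrt (k x y) * (‖u x‖ + ‖u y‖)) = A := by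
        refine Finset.sum_congr rfl fun y _ => ?_
        rw [← mul_assoc, Real.mul_self_sqrt (hknn x y)]
      have e2 : ∑ y ∈ F x, Real.sqrt (k x y) ^ 2 = ∑ y ∈ F x, k x y := by
        refine Finset.sum_congr rfl fun y _ => ?_
        rw [Real.sq_sqrt (hknn x y)]
      have e3 : ∑ y ∈ F x, (Real.sqrt (k x y) * (‖u x‖ + ‖u y‖)) ^ 2
          = ∑ y ∈ F x, k x y * (‖u x‖ + ‖u y‖) ^ 2 := by
        refine Finset.sum_congr rfl fun y _ => ?_
        rw [mul_pow, Real.sq_sqrt (hknn x y)]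
      rw [e1, e2, e3] at this
      exact this
    have hsq : ∀ a c : ℝ, (a + c) ^ 2 ≤ 2 * a ^ 2 + 2 * c ^ 2 := by
      intro a c; nlinarith [sq_nonneg (a - c)]
    have hB : ∑ y ∈ F x, k x y * (‖u x‖ + ‖u y‖) ^ 2
        ≤ ∑ y ∈ F x, k x y * (2 * ‖u x‖ ^ 2 + 2 * ‖u y‖ ^ 2) :=
      Finset.sum_le_sum fun y _ => mul_le_mul_of_nonneg_left (hsq _ _) (hknn x y)
    set B : ℝ := ∑ y ∈ F x, k x y * (2 * ‖u x‖ ^ 2 + 2 * ‖u y‖ ^ 2) with hBdef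
    have hBnn : 0 ≤ B := Finset.sum_nonneg fun y _ => mul_nonneg (hknn x y) (by positivity)
    have hA2 : A ^ 2 ≤ β * μ x * B := by
      refine hCS.trans ?_
      calc (∑ y ∈ F x, k x y) * ∑ y ∈ F x, k x y * (‖u x‖ + ‖u y‖) ^ 2
          ≤ (β * μ x) * ∑ y ∈ F x, k x y * (‖u x‖ + ‖u y‖) ^ 2 :=
            mul_le_mul_of_nonneg_right (hrow x)
              (Finset.sum_nonneg fun y _ => mul_nonneg (hknn x y) (by positivity))
        _ ≤ (β * μ x) * B :=
            mul_le_mul_of_nonneg_left hB (mul_nonneg hβ0 (hμx x).le)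
    have hne : μ x ≠ 0 := (hμx x).ne'
    calc μ x * ‖magP μ b θ ψ u x‖ ^ 2
        ≤ μ x * ((μ x)⁻¹ * A) ^ 2 := by
          refine mul_le_mul_of_nonneg_left ?_ (hμx x).le
          exact pow_le_pow_left₀ (norm_nonneg _) hnorm 2
      _ = A ^ 2 * (μ x)⁻¹ := by field_simp [hne]
      _ ≤ (β * μ x * B) * (μ x)⁻¹ :=
          mul_le_mul_of_nonneg_right hA2 (inv_nonneg.mpr (hμx x).le)
      _ = β * B := by field_simp [hne]
  -- main argument
  set N : ℝ := wnormSq μ u with hN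
  have hNsum : ∀ t : Finset V, ∑ x ∈ t, μ x * ‖u x‖ ^ 2 ≤ N := by
    intro t
    exact Summable.sum_le_tsum t (fun x _ => mul_nonneg (hμx x).le (by positivity)) hu
  by_cases hs : Summable (fun x => μ x * ‖magP μ b θ ψ u x‖ ^ 2)
  · have hW : wnormSq μ (magP μ b θ ψ u) ≤ (2 * β) ^ 2 * N := by
      refine Summable.tsum_le_of_sum_le hs ?_
      intro t
      have step1 : ∑ x ∈ t, μ x * ‖magP μ b θ ψ u x‖ ^ 2
          ≤ ∑ x ∈ t, β * ∑ y ∈ F x, k x y * (2 * ‖u x‖ ^ 2 + 2 * ‖u y‖ ^ 2) :=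
        Finset.sum_le_sum fun x _ => hpt x
      have split : ∀ x, ∑ y ∈ F x, k x y * (2 * ‖u x‖ ^ 2 + 2 * ‖u y‖ ^ 2)
          = 2 * ‖u x‖ ^ 2 * (∑ y ∈ F x, k x y) + 2 * ∑ y ∈ F x, k x y * ‖u y‖ ^ 2 := by
        intro x
        rw [Finset.mul_sum, Finset.mul_sum, ← Finset.sum_add_distrib]
        refine Finset.sum_congr rfl fun y _ => ?_
        ring
      set Y : Finset V := t.biUnion F with hY
      have hdouble : ∑ x ∈ t, ∑ y ∈ F x, k x y * ‖u y‖ ^ 2 ≤ β * N := by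
        have e1 : ∑ x ∈ t, ∑ y ∈ F x, k x y * ‖u y‖ ^ 2
            ≤ ∑ x ∈ t, ∑ y ∈ Y, k x y * ‖u y‖ ^ 2 := by
          refine Finset.sum_le_sum fun x hx => ?_
          refine Finset.sum_le_sum_of_subset_of_nonneg (Finset.subset_biUnion_of_mem F hx)
            (fun y _ _ => mul_nonneg (hknn x y) (by positivity))
        refine e1.trans ?_
        rw [Finset.sum_comm]
        have e2 : ∑ y ∈ Y, ∑ x ∈ t, k x y * ‖u y‖ ^ 2
            ≤ ∑ y ∈ Y, β * (μ y * ‖u y‖ ^ 2) := by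
          refine Finset.sum_le_sum fun y _ => ?_
          rw [← Finset.sum_mul]
          have := mul_le_mul_of_nonneg_right (hcol t y) (by positivity : (0:ℝ) ≤ ‖u y‖ ^ 2)
          calc (∑ x ∈ t, k x y) * ‖u y‖ ^ 2 ≤ β * μ y * ‖u y‖ ^ 2 := this
            _ = β * (μ y * ‖u y‖ ^ 2) := by ring
        refine e2.trans ?_
        rw [← Finset.mul_sum]
        exact mul_le_mul_of_nonneg_left (hNsum Y) hβ0
      have hfirst : ∑ x ∈ t, 2 * ‖u x‖ ^ 2 * (∑ y ∈ F x, k x y) ≤ 2 * β * N := by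
        have e1 : ∑ x ∈ t, 2 * ‖u x‖ ^ 2 * (∑ y ∈ F x, k x y)
            ≤ ∑ x ∈ t, 2 * β * (μ x * ‖u x‖ ^ 2) := by
          refine Finset.sum_le_sum fun x _ => ?_
          have := mul_le_mul_of_nonneg_left (hrow x)
            (by positivity : (0:ℝ) ≤ 2 * ‖u x‖ ^ 2)
          calc 2 * ‖u x‖ ^ 2 * (∑ y ∈ F x, k x y) ≤ 2 * ‖u x‖ ^ 2 * (β * μ x) := this
            _ = 2 * β * (μ x * ‖u x‖ ^ 2) := by ring
        refine e1.trans ?_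
        rw [← Finset.mul_sum]
        exact mul_le_mul_of_nonneg_left (hNsum t) (by positivity)
      calc ∑ x ∈ t, μ x * ‖magP μ b θ ψ u x‖ ^ 2
          ≤ ∑ x ∈ t, β * ∑ y ∈ F x, k x y * (2 * ‖u x‖ ^ 2 + 2 * ‖u y‖ ^ 2) := step1
        _ = β * ∑ x ∈ t, (2 * ‖u x‖ ^ 2 * (∑ y ∈ F x, k x y)
              + 2 * ∑ y ∈ F x, k x y * ‖u y‖ ^ 2) := by
            rw [Finset.mul_sum]
            exact Finset.sum_congr rfl fun x _ => by rw [split x]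
        _ = β * ((∑ x ∈ t, 2 * ‖u x‖ ^ 2 * (∑ y ∈ F x, k x y))
              + 2 * ∑ x ∈ t, ∑ y ∈ F x, k x y * ‖u y‖ ^ 2) := by
            rw [Finset.sum_add_distrib, Finset.mul_sum]
        _ ≤ β * (2 * β * N + 2 * (β * N)) := by
            refine mul_le_mul_of_nonneg_left ?_ hβ0
            have := mul_le_mul_of_nonneg_left hdouble (by norm_num : (0:ℝ) ≤ 2)
            linarith [hfirst, this]
        _ = (2 * β) ^ 2 * N := by ring
    have hWnn : 0 ≤ (2 * β) ^ 2 * N := by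
      have : 0 ≤ N := tsum_nonneg fun x => mul_nonneg (hμx x).le (by positivity)
      positivity
    calc Real.sqrt (wnormSq μ (magP μ b θ ψ u)) ≤ Real.sqrt ((2 * β) ^ 2 * N) :=
        Real.sqrt_le_sqrt hW
      _ = 2 * β * Real.sqrt N := by
          rw [Real.sqrt_mul (sq_nonneg _), Real.sqrt_sq (by positivity)]
  · have : wnormSq μ (magP μ b θ ψ u) = 0 := tsum_eq_zero_of_not_summable hs
    rw [this, Real.sqrt_zero]
    positivity

end
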